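/- Let V and E be finite types with n = |V| and m = |E|, and let src, trg : E → V. Let w = e_1, …, e_N be a path of the associated directed multigraph such that there do not exist indices 1 ≤ j ≤ k < j' ≤ k' ≤ N for which the contiguous segments (e_j, …, e_k) and (e_{j'}, …, e_{k'}) are both simple cycles consisting of the same set of edges (in particular, w contains no two disjoint equal contiguous simple-cycle segments). Then the length of w satisfies N ≤ n · (2^{m+1} + 1). -/

import Mathlib

/-- A path in a directed multigraph: consecutive edges match up. -/
def IsPath {V E : Type*} (src trg : E → V) (w : List E) : Prop :=
  List.Chain' (fun e f => trg e = src f) w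

/-- A simple cycle: a nonempty path whose last target equals its first source,
and whose sources are pairwise distinct. -/
def IsSimpleCycle {V E : Type*} (src trg : E → V) (w : List E) : Prop :=
  w ≠ [] ∧ IsPath src trg w ∧
    w.getLast?.map trg = w.head?.map src ∧
    (w.map src).Nodup

/-- The contiguous segment e_j, …, e_k of a list (0-based indices j ≤ k). -/
def listSegment {E : Type*} (w : List E) (j k : ℕ) : List E :=
  (w.drop j).take (k - j + 1)

namespace CycleAux
open List

variable {V E : Type*}

lemma seg_infix (w : List E) (j k : ℕ) : listSegment w j k <:+: w :=
  ((take_prefix _ _).isInfix).trans ((drop_suffix _ _).isInfix)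

lemma seg_length (w : List E) (j k : ℕ) (h : k < w.length) (hjk : j ≤ k) :
    (listSegment w j k).length = k - j + 1 := by
  simp only [listSegment, length_take, length_drop]
  omega

lemma seg_map {F : Type*} (f : E → F) (w : List E) (j k : ℕ) :
    (listSegment w j k).map f = listSegment (w.map f) j k := by
  simp [listSegment]

lemma seg_getElem? (w : List E) (j k i : ℕ) (hi : i ≤ k - j) :
    (listSegment w j k)[i]? = w[j + i]? := by
  rw [listSegment, getElem?_take, if_pos (by omega), getElem?_drop]

lemma seg_head? (w : List E) (j k : ℕ) : (listSegment w j k).head? = w[j]? := by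
  rw [head?_eq_getElem?, seg_getElem? w j k 0 (by omega), Nat.add_zero]

lemma seg_getLast? (w : List E) (j k : ℕ) (h : k < w.length) (hjk : j ≤ k) :
    (listSegment w j k).getLast? = w[k]? := by
  rw [getLast?_eq_getElem?, seg_length w j k h hjk,
    show k - j + 1 - 1 = k - j by omega, seg_getElem? w j k (k - j) le_rfl,
    show j + (k - j) = k by omega]

lemma exists_cycle_seg [Fintype V] (src trg : E → V) (w : List E)
    (hw : IsPath src trg w) (h : Fintype.card V < w.length) :
    ∃ j k, j ≤ k ∧ k < w.length ∧ IsSimpleCycle src trg (listSegment w j k) := by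
  classical
  set l := w.map src with hl
  have hlen : l.length = w.length := by simp [hl]
  have hnd : ¬ l.Nodup := fun hn => absurd hn.length_le_card (by omega)
  have hP : ∃ k, ¬ (l.take (k+1)).Nodup := by
    refine ⟨l.length - 1, ?_⟩
    rwa [show l.length - 1 + 1 = l.length by omega, take_length]
  let k0 := Nat.find hP
  have hk0 : ¬ (l.take (k0+1)).Nodup := Nat.find_spec hP
  have hmin : ∀ k < k0, (l.take (k+1)).Nodup := fun k hk =>
    not_not.1 (Nat.find_min hP hk)
  have hk0pos : 0 < k0 := by
    rcases Nat.eq_zero_or_pos k0 with h0 | h0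
    · exfalso; apply hk0; rw [h0]
      rcases l with _ | ⟨a, t⟩ <;> simp
    · exact h0
  have htk0 : (l.take k0).Nodup := by
    have := hmin (k0 - 1) (by omega)
    rwa [show k0 - 1 + 1 = k0 by omega] at this
  have hk0lt : k0 < l.length := by
    by_contra hge
    push_neg at hge
    apply hk0
    rw [take_of_length_le (by omega)]
    rwa [take_of_length_le hge] at htk0
  have hmem : l[k0] ∈ l.take k0 := by
    by_contra hnm
    apply hk0
    rw [take_succ, getElem?_eq_getElem hk0lt]
    simp only [Option.toList_some]
    rw [nodup_append]
    exact ⟨htk0, nodup_singleton _, by simp [List.disjoint_singleton, hnm]; exact fun a ha h => hnm (h ▸ ha)⟩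
  obtain ⟨i, hi, hieq⟩ := List.getElem_of_mem hmem
  have hilt : i < k0 := by rw [List.length_take] at hi; omega
  have heq : l[i]'(by omega) = l[k0] := by rw [← hieq, getElem_take]
  refine ⟨i, k0 - 1, by omega, by omega, ?_, ?_, ?_, ?_⟩
  · have := seg_length w i (k0-1) (by omega) (by omega)
    intro hnil
    rw [hnil] at this
    simp at this
  · exact hw.infix (seg_infix w _ _)
  · rw [seg_getLast? w i (k0-1) (by omega) (by omega), seg_head? w i (k0-1),
      getElem?_eq_getElem (show k0 - 1 < w.length by omega),
      getElem?_eq_getElem (show i < w.length by omega)]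
    simp only [Option.map_some]
    congr 1
    have hchain := List.isChain_iff_getElem.1 hw (k0-1) (by omega)
    rw [hchain]
    have hk0e : w[k0 - 1 + 1]'(by omega) = w[k0]'(by omega) := by
      congr 1
      omega
    rw [hk0e]
    have h1 : l[k0] = src (w[k0]'(by omega)) := by simp [hl]
    have h2 : l[i]'(by omega) = src (w[i]'(by omega)) := by simp [hl]
    rw [← h1, ← heq, h2]
  · have hseg : (listSegment w i (k0-1)).map src = (l.take k0).drop i := by
      rw [seg_map, ← hl, drop_take, listSegment]
      congr 1
      omega
    rw [hseg]
    exact htk0.sublist (drop_sublist i _)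

lemma seg_seg (w : List E) (j k a c : ℕ) (hac : a ≤ c) (hc : c ≤ k - j) :
    listSegment (listSegment w j k) a c = listSegment w (j + a) (j + c) := by
  unfold listSegment
  rw [drop_take, take_take, drop_drop]
  congr 1
  omega

end CycleAux

theorem length_le_of_no_repeated_simple_cycle_segment
    {V E : Type*} [Fintype V] [Fintype E] (src trg : E → V)
    (w : List E) (hw : IsPath src trg w)
    (hno : ¬ ∃ j k j' k' : ℕ, j ≤ k ∧ k < j' ∧ j' ≤ k' ∧ k' < w.length ∧
      IsSimpleCycle src trg (listSegment w j k) ∧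
      IsSimpleCycle src trg (listSegment w j' k') ∧
      (∀ e, e ∈ listSegment w j k ↔ e ∈ listSegment w j' k')) :
    w.length ≤ Fintype.card V * (2 ^ (Fintype.card E + 1) + 1) := by
  classical
  by_contra hlong
  push_neg at hlong
  set n := Fintype.card V with hn
  set m := Fintype.card E with hm
  have hw0 : 0 < w.length := lt_of_le_of_lt (Nat.zero_le _) hlong
  have hn1 : 1 ≤ n := by
    rcases w with _ | ⟨e, t⟩
    · simp at hw0
    · rw [hn]; exact Fintype.card_pos_iff.2 ⟨src e⟩
  set b := n + 1 with hb
  have key : (2^m + 1) * b ≤ w.length := by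
    have h1 : n * (2^(m+1) + 1) + 1 ≤ w.length := hlong
    have h2 : (2:ℕ)^(m+1) = 2 * 2^m := by rw [pow_succ]; ring
    have h3 : 1 * 2^m ≤ n * 2^m := Nat.mul_le_mul_right _ hn1
    rw [hb]; nlinarith
  have block : ∀ i : ℕ, i ≤ 2^m → ∃ j k, i*b ≤ j ∧ j ≤ k ∧ k ≤ i*b + n ∧
      IsSimpleCycle src trg (listSegment w j k) := by
    intro i hi
    have hmul : (i+1) * b ≤ (2^m+1)*b := Nat.mul_le_mul_right _ (by omega)
    have hexp : (i+1)*b = i*b + n + 1 := by rw [hb]; ring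
    have hbound : i*b + n < w.length := by omega
    have hulen : (listSegment w (i*b) (i*b + n)).length = n + 1 := by
      rw [CycleAux.seg_length w _ _ hbound (by omega)]
      omega
    have hupath : IsPath src trg (listSegment w (i*b) (i*b + n)) :=
      hw.infix (CycleAux.seg_infix w _ _)
    obtain ⟨a, c, hac, hc, hcyc⟩ := CycleAux.exists_cycle_seg src trg _ hupath
      (by rw [hulen]; omega)
    rw [hulen] at hc
    rw [CycleAux.seg_seg w (i*b) (i*b+n) a c hac (by omega)] at hcyc
    exact ⟨i*b + a, i*b + c, by omega, by omega, by omega, hcyc⟩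
  choose J K hJ hJK hK hcyc using fun i : Fin (2^m + 1) =>
    block i (Nat.lt_succ_iff.mp i.isLt)
  obtain ⟨i, i', hne, hfe⟩ := Fintype.exists_ne_map_eq_of_card_lt
      (fun i : Fin (2^m+1) => (listSegment w (J i) (K i)).toFinset)
      (by rw [Fintype.card_finset, Fintype.card_fin, ← hm]; omega)
  have main : ∀ i i' : Fin (2^m+1), (i:ℕ) < (i':ℕ) →
      (listSegment w (J i) (K i)).toFinset = (listSegment w (J i') (K i')).toFinset →
      False := by
    intro i i' hlt hfeq
    apply hno
    refine ⟨J i, K i, J i', K i', hJK i, ?_, hJK i', ?_, hcyc i, hcyc i', ?_⟩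
    · have h1 : K i ≤ (i:ℕ)*b + n := hK i
      have h2 : ((i:ℕ)+1) * b ≤ (i':ℕ) * b := Nat.mul_le_mul_right _ (by omega)
      have h3 : ((i:ℕ)+1)*b = (i:ℕ)*b + n + 1 := by rw [hb]; ring
      have h4 : (i':ℕ)*b ≤ J i' := hJ i'
      omega
    · have h1 : K i' ≤ (i':ℕ)*b + n := hK i'
      have h2 : ((i':ℕ)+1) * b ≤ (2^m+1) * b := Nat.mul_le_mul_right _ (by omega)
      have h3 : ((i':ℕ)+1)*b = (i':ℕ)*b + n + 1 := by rw [hb]; ring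
      omega
    · intro e
      rw [← List.mem_toFinset, hfeq, List.mem_toFinset]
  rcases Ne.lt_or_gt hne with hlt | hlt
  · exact main i i' hlt hfe
  · exact main i' i hlt hfe.symm
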